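/- Let R_max(m) = (c−1)·d·(m²−m)/2 for real m ≥ 2, c > 1, d > 0. Then the function f(m) = (m−1)/((m−1)cd − R_max(m)) · log(c(m−1)/((m−1)cd − R_max(m))) has a critical point precisely when log((m−1)/((m−1)cd − R_max(m))) + log c + 1 = 0, and this yields m = 2(cd − e·c)/((c−1)d) (where e·c = e^{1+log c}), provided (m−1)cd − R_max(m) > 0. -/

import Mathlib

open Real

/-- first-order condition for the optimal number of groups m.
With R_max(m) = (c−1)d(m²−m)/2 and f(m) = (m−1)/N(m) · log(c(m−1)/N(m)),
N(m) = (m−1)cd − R_max(m), a point m (with N(m) > 0, m > 1) is critical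
precisely when log((m−1)/N(m)) + log c + 1 = 0, and this yields
m = 2(cd − e·c)/((c−1)d). -/
theorem srr_optimal_m_first_order_condition
    (c d : ℝ) (hc : 1 < c) (hd : 0 < d)
    (R : ℝ → ℝ) (hR : ∀ m, R m = (c - 1) * d * (m ^ 2 - m) / 2)
    (N : ℝ → ℝ) (hN : ∀ m, N m = (m - 1) * c * d - R m)
    (f : ℝ → ℝ)
    (hf : ∀ m, f m = (m - 1) / N m * Real.log (c * (m - 1) / N m))
    (m : ℝ) (hm : 1 < m) (hNm : 0 < N m) :
    (deriv f m = 0 ↔ Real.log ((m - 1) / N m) + Real.log c + 1 = 0) ∧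
    (Real.log ((m - 1) / N m) + Real.log c + 1 = 0 →
      m = 2 * (c * d - Real.exp 1 * c) / ((c - 1) * d)) := by
  set A : ℝ := c * d with hA
  set B : ℝ := (c - 1) * d / 2 with hB
  have hBpos : 0 < B := by
    have : 0 < c - 1 := by linarith
    positivity
  have hNfac : ∀ x : ℝ, N x = (x - 1) * (A - B * x) := by
    intro x; rw [hN, hR, hA, hB]; ring
  have hc0 : (0:ℝ) < c := by linarith
  -- positivity of u m := A - B * m
  have hu : 0 < A - B * m := by
    have h1 : 0 < (m - 1) * (A - B * m) := by rw [← hNfac]; exact hNm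
    nlinarith
  have hune : A - B * m ≠ 0 := ne_of_gt hu
  -- f agrees locally with the nice function
  set h : ℝ → ℝ := fun x => (Real.log c - Real.log (A - B * x)) * (A - B * x)⁻¹ with hh
  have hev : f =ᶠ[nhds m] h := by
    have hopen : ∀ᶠ x in nhds m, 1 < x ∧ 0 < A - B * x := by
      have h1 : ∀ᶠ x in nhds m, 1 < x :=
        eventually_gt_nhds hm
      have h2 : ∀ᶠ x in nhds m, 0 < A - B * x := by
        have hcont : ContinuousAt (fun x : ℝ => A - B * x) m := by fun_prop
        exact hcont.eventually (eventually_gt_nhds hu)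
      exact h1.and h2
    filter_upwards [hopen] with x hx
    obtain ⟨hx1, hx2⟩ := hx
    have hx1' : x - 1 ≠ 0 := by linarith
    have hx2' : A - B * x ≠ 0 := ne_of_gt hx2
    rw [hf, hNfac, hh]
    have e1 : (x - 1) / ((x - 1) * (A - B * x)) = (A - B * x)⁻¹ := by
      field_simp
    have e2 : c * (x - 1) / ((x - 1) * (A - B * x)) = c * (A - B * x)⁻¹ := by
      field_simp
    rw [e1, e2, Real.log_mul (ne_of_gt hc0) (inv_ne_zero hx2'), Real.log_inv]
    ring
  -- derivative of h at m
  have hder : HasDerivAt h ((B / (A - B * m) ^ 2) * (1 + Real.log c - Real.log (A - B * m))) m := by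
    have hu' : HasDerivAt (fun x : ℝ => A - B * x) (-B) m := by
      simpa using ((hasDerivAt_id m).const_mul B).const_sub A
    have hlog : HasDerivAt (fun x : ℝ => Real.log (A - B * x)) (-B / (A - B * m)) m :=
      hu'.log hune
    have hinv : HasDerivAt (fun x : ℝ => (A - B * x)⁻¹) (-(-B) / (A - B * m) ^ 2) m :=
      hu'.inv hune
    have h1 : HasDerivAt (fun x : ℝ => Real.log c - Real.log (A - B * x))
        (-(-B / (A - B * m))) m := hlog.const_sub _
    have : HasDerivAt h _ m := h1.mul hinv
    convert this using 1
    field_simp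
    ring
  have hderiv : deriv f m = (B / (A - B * m) ^ 2) * (1 + Real.log c - Real.log (A - B * m)) := by
    rw [hev.deriv_eq, hder.deriv]
  -- rewrite log ((m-1)/N m)
  have hm1 : m - 1 ≠ 0 := by linarith
  have hlogN : Real.log ((m - 1) / N m) = -Real.log (A - B * m) := by
    rw [hNfac]
    have : (m - 1) / ((m - 1) * (A - B * m)) = (A - B * m)⁻¹ := by field_simp
    rw [this, Real.log_inv]
  constructor
  · rw [hderiv, hlogN]
    constructor
    · intro h0
      have hBne : B / (A - B * m) ^ 2 ≠ 0 := by positivity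
      have : 1 + Real.log c - Real.log (A - B * m) = 0 := by
        rcases mul_eq_zero.1 h0 with h' | h'
        · exact absurd h' hBne
        · exact h'
      linarith
    · intro h0
      have : 1 + Real.log c - Real.log (A - B * m) = 0 := by linarith
      rw [this, mul_zero]
  · intro h0
    rw [hlogN] at h0
    have hlogu : Real.log (A - B * m) = Real.log c + 1 := by linarith
    have hexp : A - B * m = c * Real.exp 1 := by
      have := Real.exp_log hu
      rw [← this, hlogu, Real.exp_add, Real.exp_log hc0]
    have hcd : (c - 1) * d ≠ 0 := by
      have : 0 < c - 1 := by linarith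
      positivity
    rw [hA, hB] at hexp
    field_simp
    rw [hA, eq_div_iff (sub_ne_zero.2 (ne_of_gt hc))]
    linarith [hexp]
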